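/- Let E be a real normed vector space, U ⊆ E an open set, and Φ : E → ℍ a map differentiable on U whose values are imaginary unit quaternions: re(Φ x) = 0 and ‖Φ x‖ = 1 for every x ∈ U. Let α : E → (E →L[ℝ] ℝ) be any family of real-valued continuous linear forms. For x ∈ U and v ∈ E define the connection one-form A x v := −(1/2) • (Φ x * (fderiv ℝ Φ x v)) + (α x v) • Φ x (equivalently A = (1/2) Φ^{-1} dΦ + Φ α, since Φ^{-1} = −Φ for a unit imaginary quaternion). Then the covariant derivative of Φ with respect to A vanishes: for every x ∈ U and v ∈ E, fderiv ℝ Φ x v + (A x v) * Φ x − Φ x * (A x v) = 0. -/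

import Mathlib

/-- For a unit imaginary-quaternion-valued map `Φ` on an open set `U` and any real-valued
one-form `α`, the connection one-form `A = (1/2) Φ⁻¹ dΦ + Φ α = −(1/2) Φ dΦ + Φ α`
satisfies `d_A Φ = 0`, i.e. `dΦ + [A, Φ] = 0`. -/
theorem covariant_deriv_vanishes {E : Type*} [NormedAddCommGroup E] [NormedSpace ℝ E]
    (U : Set E) (hU : IsOpen U) (Φ : E → Quaternion ℝ)
    (hΦdiff : ∀ x ∈ U, DifferentiableAt ℝ Φ x)
    (hΦim : ∀ x ∈ U, (Φ x).re = 0) (hΦunit : ∀ x ∈ U, ‖Φ x‖ = 1)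
    (α : E → E →L[ℝ] ℝ)
    (A : E → E → Quaternion ℝ)
    (hA : ∀ x v, A x v = -(1 / 2 : ℝ) • (Φ x * fderiv ℝ Φ x v) + (α x v) • Φ x) :
    ∀ x ∈ U, ∀ v : E, fderiv ℝ Φ x v + A x v * Φ x - Φ x * A x v = 0 := by
  -- key: Φ x * Φ x = -1 on U
  have hsq : ∀ x ∈ U, Φ x * Φ x = -1 := by
    intro x hx
    have hstar : star (Φ x) = -(Φ x) := by
      ext <;> simp [Quaternion.re_star, hΦim x hx]
    have h1 : Φ x * star (Φ x) = ((Quaternion.normSq (Φ x) : ℝ) : Quaternion ℝ) := by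
      rw [Quaternion.mul_star_eq_coe]; rfl
    have h2 : Quaternion.normSq (Φ x) = 1 := by
      rw [Quaternion.normSq_eq_norm_mul_self, hΦunit x hx]; ring
    rw [hstar] at h1
    have := h1
    rw [h2] at this
    simp only [mul_neg] at this
    have := neg_eq_iff_eq_neg.mp this
    simpa using this
  intro x hx v
  have hd := hΦdiff x hx
  -- derivative of Φ*Φ is zero since Φ*Φ = -1 on U
  have hker : Φ x * fderiv ℝ Φ x v + fderiv ℝ Φ x v * Φ x = 0 := by
    have hconst : (fun y => Φ y * Φ y) =ᶠ[nhds x] fun _ => (-1 : Quaternion ℝ) := by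
      filter_upwards [hU.mem_nhds hx] with y hy using hsq y hy
    have hf : fderiv ℝ (fun y => Φ y * Φ y) x = 0 := by
      rw [hconst.fderiv_eq]; exact fderiv_const_apply _
    have hmul : fderiv ℝ (fun y => Φ y * Φ y) x v
        = Φ x * fderiv ℝ Φ x v + fderiv ℝ Φ x v * Φ x := by
      rw [show (fun y => Φ y * Φ y) = Φ * Φ from rfl, fderiv_mul' hd hd]; simp [smul_eq_mul]
    rw [hf] at hmul
    simpa using hmul.symm
  rw [hA]
  set d := fderiv ℝ Φ x v
  have h1 : Φ x * d = -(d * Φ x) := eq_neg_of_add_eq_zero_left hker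
  have e1 : Φ x * (d * Φ x) = d := by
    rw [← mul_assoc, h1, neg_mul, mul_assoc, hsq x hx]; simp
  have e2 : Φ x * (Φ x * d) = -d := by
    rw [← mul_assoc, hsq x hx]; simp
  rw [add_mul, mul_add, smul_mul_assoc, smul_mul_assoc, mul_smul_comm, mul_smul_comm,
    mul_assoc, e1, e2, hsq x hx]
  module
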